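/- arXiv:2202.03613 — 2 statements merged into one kernel-verified Lean document; each statement's English description precedes it below -/
import Mathlib

section
/- Data Z_1, ..., Z_n, Z_{n+1} generated under feedback covariate shift are pseudo-exchangeable random variables with core function h(z_1, ..., z_{n+1}) = Π_{i=1}^{n+1} p_X(x_i) p_{Y|X}(y_i | x_i) and factor functions g_i(z_i; z_{-i}) = 1 for i = 1, ..., n, and g_{n+1}(z_{n+1}; z_{1:n}) = v(x_{n+1}; z_{1:n}), where v(x; D) = p̃_{X;D}(x) / p_X(x) is the likelihood ratio between the test input density induced by the data multiset D and the training input density. -/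
open MeasureTheory ProbabilityTheory
open scoped BigOperators ENNReal

noncomputable section

/-- The multiset of all values of a finite tuple. -/
def allOf {Z : Type*} {n : ℕ} (v : Fin n → Z) : Multiset Z :=
  Finset.univ.val.map v

/-- The multiset of all values of the tuple except (one occurrence of) the `i`-th one. -/
def others {Z : Type*} [DecidableEq Z] {n : ℕ} (v : Fin n → Z) (i : Fin n) : Multiset Z :=
  (allOf v).erase (v i)

/-- The pseudo-exchangeable form of a joint density. -/
def peDensity {Z : Type*} [DecidableEq Z] {n : ℕ}
    (g : Fin (n + 1) → Z → Multiset Z → ℝ) (h : Multiset Z → ℝ)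
    (v : Fin (n + 1) → Z) : ℝ :=
  (∏ i, g i (v i) (others v i)) * h (allOf v)

/-- Pseudo-exchangeability of random variables with factor functions `g` and core `h`. -/
def IsPseudoExchangeable {Ω Z : Type*} [MeasurableSpace Ω] [MeasurableSpace Z] [DecidableEq Z]
    {n : ℕ} (P : Measure Ω) (Zf : Fin (n + 1) → Ω → Z) (ν : Measure Z)
    (g : Fin (n + 1) → Z → Multiset Z → ℝ) (h : Multiset Z → ℝ) : Prop :=
  P.map (fun ω i => Zf i ω)
    = (Measure.pi fun _ : Fin (n + 1) => ν).withDensity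
        fun v => ENNReal.ofReal (peDensity g h v)

/-- The joint density of data generated under feedback covariate shift: the training points
`z_1, ..., z_n` are i.i.d. with density `p_X(x) p_{Y|X}(y|x)`, and the test point `z_{n+1}`
has input density `p̃_{X; z_{1:n}}` (induced by the multiset of training data) and the same
conditional label density `p_{Y|X}`. -/
def fcsDensity {𝒳 : Type*} {n : ℕ}
    (pX : 𝒳 → ℝ) (pYX : 𝒳 → ℝ → ℝ) (pt : Multiset (𝒳 × ℝ) → 𝒳 → ℝ)
    (z : Fin (n + 1) → 𝒳 × ℝ) : ℝ :=
  (∏ i : Fin n, pX (z i.castSucc).1 * pYX (z i.castSucc).1 (z i.castSucc).2) *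
    (pt (allOf fun i : Fin n => z i.castSucc) (z (Fin.last n)).1 *
      pYX (z (Fin.last n)).1 (z (Fin.last n)).2)

lemma allOf_cons {Z : Type*} {n : ℕ} (v : Fin (n+1) → Z) :
    allOf v = v (Fin.last n) ::ₘ allOf (fun i : Fin n => v i.castSucc) := by
  unfold allOf
  rw [Fin.univ_castSuccEmb, Finset.cons_val, Multiset.map_cons, Finset.map_val,
    Multiset.map_map]
  rfl

lemma prod_allOf {Z : Type*} {n : ℕ} (v : Fin n → Z) (f : Z → ℝ) :
    ((allOf v).map f).prod = ∏ i, f (v i) := by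
  unfold allOf
  rw [Multiset.map_map]
  rfl

/-- Data generated under feedback covariate shift are pseudo-exchangeable
with core function `h(z_1, ..., z_{n+1}) = ∏ i, p_X(x_i) p_{Y|X}(y_i | x_i)` and factor
functions `g_i ≡ 1` for `i ≤ n` and `g_{n+1}(z; D) = v(x; D) = p̃_{X;D}(x) / p_X(x)`. -/
theorem statement_3 {𝒳 Ω : Type*} [MeasurableSpace 𝒳] [DecidableEq 𝒳] [MeasurableSpace Ω]
    {n : ℕ} (P : Measure Ω) [IsProbabilityMeasure P]
    (Zf : Fin (n + 1) → Ω → 𝒳 × ℝ) (hZf : ∀ i, Measurable (Zf i))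
    (ν : Measure (𝒳 × ℝ)) [SigmaFinite ν]
    (pX : 𝒳 → ℝ) (pYX : 𝒳 → ℝ → ℝ) (pt : Multiset (𝒳 × ℝ) → 𝒳 → ℝ)
    (habs : ∀ D x, pX x = 0 → pt D x = 0)
    (hFCS : P.map (fun ω i => Zf i ω)
      = (Measure.pi fun _ : Fin (n + 1) => ν).withDensity
          fun v => ENNReal.ofReal (fcsDensity pX pYX pt v)) :
    IsPseudoExchangeable P Zf ν
      (fun i z D => if i = Fin.last n then pt D z.1 / pX z.1 else 1)
      (fun D => (D.map fun z => pX z.1 * pYX z.1 z.2).prod) := by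
  unfold IsPseudoExchangeable
  rw [hFCS]
  congr 1
  funext v
  congr 1
  have hothers : others v (Fin.last n) = allOf (fun i : Fin n => v i.castSucc) := by
    rw [others, allOf_cons, Multiset.erase_cons_head]
  unfold fcsDensity peDensity
  rw [Fin.prod_univ_castSucc, allOf_cons]
  simp only [Multiset.map_cons, Multiset.prod_cons, prod_allOf, hothers, if_pos rfl,
    if_neg (Fin.castSucc_lt_last _).ne, Finset.prod_const_one, one_mul]
  set A := ∏ i : Fin n, pX (v i.castSucc).1 * pYX (v i.castSucc).1 (v i.castSucc).2 with hA
  set D := allOf (fun i : Fin n => v i.castSucc)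
  set x := (v (Fin.last n)).1
  set y := (v (Fin.last n)).2
  by_cases hx : pX x = 0
  · rw [habs D x hx, hx]
    ring
  · simp only [ite_true, eq_self_iff_true]
    field_simp

end
end

section
/- Fix distinct nonnegative calibration scores S_(1) < S_(2) < ... < S_(m) with probability masses w_1, ..., w_m and a test mass w_{m+1}, all nonnegative and summing to 1, and fix β ∈ (0, 1). For t ≥ 0 let F_t denote the discrete distribution placing mass w_i at S_(i) for i ≤ m and mass w_{m+1} at t. Then the function t ↦ P( t ≤ RandomizedQuantile_β(F_t) ), where the probability is over the randomization of the randomized β-quantile of F_t, is constant on each of the m+1 intervals [0, S_(1)), (S_(1), S_(2)), ..., (S_(m−1), S_(m)), (S_(m), ∞); moreover its constant value on each interval equals 1 if t is at most the β-quantile lower bound of F_t, equals 0 if t exceeds the β-quantile of F_t, and otherwise equals 1 − (QF_β(F_t) − β)/(QF_β(F_t) − LF_β(F_t)), where QF_β(F_t) and LF_β(F_t) denote the CDF of F_t at its β-quantile and at its β-quantile lower bound. -/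
open MeasureTheory
open scoped BigOperators ENNReal

noncomputable section

/-- The CDF of the discrete distribution placing mass `w i` at the point `s i`. -/
def dCdf {m : ℕ} (s w : Fin m → ℝ) (t : ℝ) : ℝ :=
  ∑ i ∈ Finset.univ.filter fun i => s i ≤ t, w i

/-- The CDF of the discrete distribution, extended to `EReal` (value `0` at `-∞`). -/
def eCdf {m : ℕ} (s w : Fin m → ℝ) (t : EReal) : ℝ :=
  ∑ i ∈ Finset.univ.filter fun i => (s i : EReal) ≤ t, w i

/-- The `β`-quantile of the discrete distribution placing mass `w i` at the point `s i`. -/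
def quantile {m : ℕ} (β : ℝ) (s w : Fin m → ℝ) : ℝ :=
  sInf {t : ℝ | β ≤ dCdf s w t}

/-- The `β`-quantile lower bound (possibly `-∞`). -/
def quantileLB {m : ℕ} (β : ℝ) (s w : Fin m → ℝ) : EReal :=
  sInf {t : EReal | eCdf s w t < β ∧
    β ≤ eCdf s w t + ∑ j ∈ Finset.univ.filter fun j => s j = quantile β s w, w j}

/-- The randomized `β`-quantile, realized via a uniform random value `u ∈ [0, 1]`. -/
def randQuantile {m : ℕ} (β : ℝ) (s w : Fin m → ℝ) (u : ℝ) : EReal :=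
  if u ≤ (dCdf s w (quantile β s w) - β) /
      (dCdf s w (quantile β s w) - eCdf s w (quantileLB β s w))
  then quantileLB β s w
  else (quantile β s w : EReal)

/-- For `t ≥ 0`, `F_t` is the discrete distribution placing mass `w i` at `S i` for `i ≤ m`
and mass `w (m+1)` at `t`; `coverProb β S w t` is the probability, over the uniform
randomization `u ∈ [0, 1]`, that `t` is at most the randomized `β`-quantile of `F_t`. -/
def coverProb {m : ℕ} (β : ℝ) (S : Fin m → ℝ) (w : Fin (m + 1) → ℝ) (t : ℝ) : ℝ≥0∞ :=
  (volume.restrict (Set.Icc (0 : ℝ) 1))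
    {u | (t : EReal) ≤ randQuantile β (Fin.snoc S t) w u}

section helpers

variable {n : ℕ}

lemma dCdf_mono (s w : Fin n → ℝ) (hw : ∀ i, 0 ≤ w i) {x y : ℝ} (h : x ≤ y) :
    dCdf s w x ≤ dCdf s w y := by
  apply Finset.sum_le_sum_of_subset_of_nonneg
  · intro i hi
    simp only [Finset.mem_filter, Finset.mem_univ, true_and] at *
    linarith
  · exact fun i _ _ => hw i

lemma eCdf_coe (s w : Fin n → ℝ) (x : ℝ) : eCdf s w (x : EReal) = dCdf s w x := by
  unfold eCdf dCdf
  apply Finset.sum_congr _ (fun _ _ => rfl)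
  apply Finset.filter_congr
  intro i _
  exact EReal.coe_le_coe_iff

lemma eCdf_bot (s w : Fin n → ℝ) : eCdf s w ⊥ = 0 := by
  unfold eCdf
  rw [Finset.filter_false_of_mem, Finset.sum_empty]
  intro i _
  simp

lemma quantile_eq (s w : Fin (n+1) → ℝ) (hw : ∀ i, 0 ≤ w i) {β : ℝ} (hβ0 : 0 < β)
    (j₀ : Fin (n+1)) (h1 : β ≤ dCdf s w (s j₀))
    (h2 : ∀ k, β ≤ dCdf s w (s k) → s j₀ ≤ s k) :
    quantile β s w = s j₀ := by
  have hlb : ∀ x ∈ {t : ℝ | β ≤ dCdf s w t}, s j₀ ≤ x := by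
    intro x hx
    simp only [Set.mem_setOf_eq] at hx
    have hne : (Finset.univ.filter fun i => s i ≤ x).Nonempty := by
      by_contra h
      rw [Finset.not_nonempty_iff_eq_empty] at h
      unfold dCdf at hx
      rw [h, Finset.sum_empty] at hx
      linarith
    obtain ⟨k, hk, hkmax⟩ := Finset.exists_max_image _ s hne
    simp only [Finset.mem_filter, Finset.mem_univ, true_and] at hk
    have hβk : β ≤ dCdf s w (s k) := by
      refine le_trans hx (Finset.sum_le_sum_of_subset_of_nonneg ?_ fun i _ _ => hw i)
      intro i hi
      simp only [Finset.mem_filter, Finset.mem_univ, true_and] at *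
      exact hkmax i (by simp [Finset.mem_filter, hi])
    exact le_trans (h2 k hβk) hk
  exact le_antisymm (csInf_le ⟨s j₀, hlb⟩ h1) (le_csInf ⟨s j₀, h1⟩ hlb)

lemma exists_quantile_char (s w : Fin (n+1) → ℝ) (hw1 : ∑ i, w i = 1) {β : ℝ} (hβ1 : β ≤ 1) :
    ∃ j₀, β ≤ dCdf s w (s j₀) ∧ ∀ k, β ≤ dCdf s w (s k) → s j₀ ≤ s k := by
  have hTne : (Finset.univ.filter fun k => β ≤ dCdf s w (s k)).Nonempty := by
    obtain ⟨k, -, hkmax⟩ := Finset.exists_max_image Finset.univ s ⟨0, Finset.mem_univ 0⟩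
    refine ⟨k, ?_⟩
    simp only [Finset.mem_filter, Finset.mem_univ, true_and]
    have hd : dCdf s w (s k) = ∑ i, w i := by
      unfold dCdf
      rw [Finset.filter_true_of_mem (fun i _ => hkmax i (Finset.mem_univ i))]
    rw [hd, hw1]; exact hβ1
  obtain ⟨j₀, hj₀, hmin⟩ := Finset.exists_min_image _ s hTne
  simp only [Finset.mem_filter, Finset.mem_univ, true_and] at hj₀ hmin
  exact ⟨j₀, hj₀, fun k hk => hmin k (by simp [Finset.mem_filter, hk])⟩

lemma dCdf_split (s w : Fin n → ℝ) (x : ℝ) :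
    dCdf s w x = (∑ j ∈ Finset.univ.filter fun j => s j < x, w j)
      + ∑ j ∈ Finset.univ.filter fun j => s j = x, w j := by
  unfold dCdf
  rw [← Finset.sum_filter_add_sum_filter_not (Finset.univ.filter fun i => s i ≤ x)
    (fun i => s i = x) w, add_comm]
  congr 1
  · congr 1
    rw [Finset.filter_filter]
    apply Finset.filter_congr
    intro i _
    constructor
    · rintro ⟨h1, h2⟩; exact lt_of_le_of_ne h1 h2
    · intro h; exact ⟨h.le, h.ne⟩
  · congr 1
    rw [Finset.filter_filter]
    apply Finset.filter_congr
    intro i _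
    constructor
    · rintro ⟨_, h2⟩; exact h2
    · intro h; exact ⟨h.le, h⟩

lemma quantileLB_eq_bot (s w : Fin n → ℝ) {β : ℝ} (hβ0 : 0 < β)
    (hb : β ≤ ∑ j ∈ Finset.univ.filter fun j => s j = quantile β s w, w j) :
    quantileLB β s w = ⊥ := by
  refine le_antisymm (sInf_le ?_) bot_le
  constructor
  · rw [eCdf_bot]; exact hβ0
  · rw [eCdf_bot, zero_add]; exact hb

lemma quantileLB_eq (s w : Fin (n+1) → ℝ) {β : ℝ}
    (hb : ¬ β ≤ ∑ j ∈ Finset.univ.filter fun j => s j = quantile β s w, w j)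
    (j₁ : Fin (n+1))
    (hc1 : dCdf s w (s j₁) < β)
    (hc2 : β ≤ dCdf s w (s j₁) + ∑ j ∈ Finset.univ.filter fun j => s j = quantile β s w, w j)
    (hmin : ∀ k, dCdf s w (s k) < β →
      β ≤ dCdf s w (s k) + (∑ j ∈ Finset.univ.filter fun j => s j = quantile β s w, w j) →
      s j₁ ≤ s k) :
    quantileLB β s w = (s j₁ : EReal) := by
  refine le_antisymm (sInf_le ?_) (le_sInf ?_)
  · exact ⟨by rw [eCdf_coe]; exact hc1, by rw [eCdf_coe]; exact hc2⟩
  · rintro x ⟨hx1, hx2⟩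
    have hne : (Finset.univ.filter fun i => (s i : EReal) ≤ x).Nonempty := by
      by_contra h
      rw [Finset.not_nonempty_iff_eq_empty] at h
      have h0 : eCdf s w x = 0 := by unfold eCdf; rw [h, Finset.sum_empty]
      rw [h0, zero_add] at hx2
      exact hb hx2
    obtain ⟨k, hk, hkmax⟩ := Finset.exists_max_image _ s hne
    simp only [Finset.mem_filter, Finset.mem_univ, true_and] at hk
    have hfil : (Finset.univ.filter fun i => s i ≤ s k)
        = Finset.univ.filter fun i => (s i : EReal) ≤ x := by
      ext i
      simp only [Finset.mem_filter, Finset.mem_univ, true_and]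
      constructor
      · intro h; exact le_trans (EReal.coe_le_coe_iff.2 h) hk
      · intro h
        exact hkmax i (by simp [Finset.mem_filter, h])
    have hdk : dCdf s w (s k) = eCdf s w x := by unfold dCdf eCdf; rw [hfil]
    have hle := hmin k (by rw [hdk]; exact hx1) (by rw [hdk]; exact hx2)
    exact le_trans (EReal.coe_le_coe_iff.2 hle) hk

lemma quantileLB_char (s w : Fin (n+1) → ℝ) (hw : ∀ i, 0 ≤ w i) {β : ℝ} (hβ0 : 0 < β)
    (j₀ : Fin (n+1)) (hQ : quantile β s w = s j₀)
    (h1 : β ≤ dCdf s w (s j₀)) (h2 : ∀ k, β ≤ dCdf s w (s k) → s j₀ ≤ s k) :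
    (quantileLB β s w = ⊥
        ∧ β ≤ ∑ j ∈ Finset.univ.filter fun j => s j = quantile β s w, w j)
    ∨ ∃ j₁, quantileLB β s w = (s j₁ : EReal)
        ∧ ¬ (β ≤ ∑ j ∈ Finset.univ.filter fun j => s j = quantile β s w, w j)
        ∧ dCdf s w (s j₁) < β
        ∧ β ≤ dCdf s w (s j₁) + ∑ j ∈ Finset.univ.filter fun j => s j = quantile β s w, w j
        ∧ ∀ k, dCdf s w (s k) < β →
            β ≤ dCdf s w (s k) + (∑ j ∈ Finset.univ.filter fun j => s j = quantile β s w, w j) →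
            s j₁ ≤ s k := by
  by_cases hb : β ≤ ∑ j ∈ Finset.univ.filter fun j => s j = quantile β s w, w j
  · exact Or.inl ⟨quantileLB_eq_bot s w hβ0 hb, hb⟩
  · right
    -- find some k₀ satisfying the conditions
    have hsplit := dCdf_split s w (s j₀)
    rw [hQ] at hb
    have hD : (Finset.univ.filter fun i => s i < s j₀).Nonempty := by
      by_contra h
      rw [Finset.not_nonempty_iff_eq_empty] at h
      rw [h, Finset.sum_empty, zero_add] at hsplit
      exact hb (le_trans h1 hsplit.le)
    obtain ⟨k₀, hk₀, hk₀max⟩ := Finset.exists_max_image _ s hD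
    simp only [Finset.mem_filter, Finset.mem_univ, true_and] at hk₀
    have hfil : (Finset.univ.filter fun i => s i ≤ s k₀)
        = Finset.univ.filter fun i => s i < s j₀ := by
      ext i
      simp only [Finset.mem_filter, Finset.mem_univ, true_and]
      constructor
      · intro h; exact lt_of_le_of_lt h hk₀
      · intro h; exact hk₀max i (by simp [Finset.mem_filter, h])
    have hdk₀ : dCdf s w (s k₀) = ∑ j ∈ Finset.univ.filter fun j => s j < s j₀, w j := by
      unfold dCdf; rw [hfil]
    have hck1 : dCdf s w (s k₀) < β := by
      by_contra h
      push_neg at h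
      exact absurd (h2 k₀ h) (not_le.2 hk₀)
    have hck2 : β ≤ dCdf s w (s k₀)
        + ∑ j ∈ Finset.univ.filter fun j => s j = s j₀, w j := by
      rw [hdk₀, ← hsplit]; exact h1
    -- pick the minimal such index
    have hCne : (Finset.univ.filter fun k => dCdf s w (s k) < β
        ∧ β ≤ dCdf s w (s k) + ∑ j ∈ Finset.univ.filter fun j => s j = s j₀, w j).Nonempty :=
      ⟨k₀, by simp only [Finset.mem_filter, Finset.mem_univ, true_and]; exact ⟨hck1, hck2⟩⟩
    obtain ⟨j₁, hj₁, hj₁min⟩ := Finset.exists_min_image _ s hCne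
    simp only [Finset.mem_filter, Finset.mem_univ, true_and] at hj₁ hj₁min
    have hmin : ∀ k, dCdf s w (s k) < β →
        β ≤ dCdf s w (s k) + (∑ j ∈ Finset.univ.filter fun j => s j = s j₀, w j) →
        s j₁ ≤ s k := by
      intro k hk1 hk2
      exact hj₁min k ⟨hk1, hk2⟩
    refine ⟨j₁, ?_, by rwa [hQ], by exact hj₁.1, by rw [hQ]; exact hj₁.2, by rw [hQ]; exact hmin⟩
    exact quantileLB_eq s w (by rwa [hQ]) j₁ hj₁.1 (by rw [hQ]; exact hj₁.2) (by rw [hQ]; exact hmin)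

lemma quantileLB_lt (s w : Fin (n+1) → ℝ) (hw : ∀ i, 0 ≤ w i) {β : ℝ} (hβ0 : 0 < β)
    (j₀ : Fin (n+1)) (hQ : quantile β s w = s j₀)
    (h1 : β ≤ dCdf s w (s j₀)) (h2 : ∀ k, β ≤ dCdf s w (s k) → s j₀ ≤ s k) :
    quantileLB β s w < ((s j₀ : ℝ) : EReal) := by
  rcases quantileLB_char s w hw hβ0 j₀ hQ h1 h2 with ⟨h, -⟩ | ⟨j₁, hLB, -, hc1, -, -⟩
  · rw [h]; exact EReal.bot_lt_coe _
  · rw [hLB]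
    rw [EReal.coe_lt_coe_iff]
    by_contra h
    push_neg at h
    exact absurd (le_trans h1 (dCdf_mono s w hw h)) (not_le.2 hc1)

lemma eCdf_quantileLB_lt (s w : Fin (n+1) → ℝ) (hw : ∀ i, 0 ≤ w i) {β : ℝ} (hβ0 : 0 < β)
    (j₀ : Fin (n+1)) (hQ : quantile β s w = s j₀)
    (h1 : β ≤ dCdf s w (s j₀)) (h2 : ∀ k, β ≤ dCdf s w (s k) → s j₀ ≤ s k) :
    eCdf s w (quantileLB β s w) < β := by
  rcases quantileLB_char s w hw hβ0 j₀ hQ h1 h2 with ⟨h, -⟩ | ⟨j₁, hLB, -, hc1, -, -⟩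
  · rw [h, eCdf_bot]; exact hβ0
  · rw [hLB, eCdf_coe]; exact hc1

end helpers

lemma coverProb_formula {m : ℕ} (S : Fin m → ℝ) (w : Fin (m+1) → ℝ)
    (hw : ∀ i, 0 ≤ w i) (hw1 : ∑ i, w i = 1) {β : ℝ} (hβ : β ∈ Set.Ioo (0:ℝ) 1) (t : ℝ) :
    coverProb β S w t =
      if (t : EReal) ≤ quantileLB β (Fin.snoc S t) w then 1
      else if quantile β (Fin.snoc S t) w < t then 0
      else ENNReal.ofReal
        (1 - (dCdf (Fin.snoc S t) w (quantile β (Fin.snoc S t) w) - β) /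
          (dCdf (Fin.snoc S t) w (quantile β (Fin.snoc S t) w)
            - eCdf (Fin.snoc S t) w (quantileLB β (Fin.snoc S t) w))) := by
  obtain ⟨hβ0, hβ1⟩ := hβ
  set s : Fin (m+1) → ℝ := Fin.snoc S t with hs
  obtain ⟨j₀, h1, h2⟩ := exists_quantile_char s w hw1 hβ1.le
  have hQ : quantile β s w = s j₀ := quantile_eq s w hw hβ0 j₀ h1 h2
  have hLBlt : quantileLB β s w < ((quantile β s w : ℝ) : EReal) := by
    rw [hQ]; exact quantileLB_lt s w hw hβ0 j₀ hQ h1 h2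
  have hLF : eCdf s w (quantileLB β s w) < β := eCdf_quantileLB_lt s w hw hβ0 j₀ hQ h1 h2
  have hQF : β ≤ dCdf s w (quantile β s w) := by rw [hQ]; exact h1
  set Q := quantile β s w with hQdef
  set LB := quantileLB β s w with hLBdef
  set LF := eCdf s w LB with hLFdef
  set QF := dCdf s w Q with hQFdef
  set c := (QF - β) / (QF - LF) with hc
  have hden : 0 < QF - LF := by linarith
  have hc0 : 0 ≤ c := div_nonneg (by linarith) hden.le
  have hc1 : c < 1 := (div_lt_one hden).2 (by linarith)
  rw [coverProb]
  by_cases hcase1 : (t : EReal) ≤ LB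
  · rw [if_pos hcase1]
    have hset : {u : ℝ | (t : EReal) ≤ randQuantile β s w u} = Set.univ := by
      ext u
      simp only [Set.mem_setOf_eq, Set.mem_univ, iff_true, randQuantile, ← hQdef, ← hLBdef,
        ← hLFdef, ← hQFdef, ← hc]
      split
      · exact hcase1
      · exact hcase1.trans hLBlt.le
    rw [hset, Measure.restrict_apply_univ, Real.volume_Icc]
    norm_num
  · rw [if_neg hcase1]
    by_cases hcase2 : Q < t
    · rw [if_pos hcase2]
      have hset : {u : ℝ | (t : EReal) ≤ randQuantile β s w u} = ∅ := by
        ext u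
        simp only [Set.mem_setOf_eq, Set.mem_empty_iff_false, iff_false, randQuantile,
          ← hQdef, ← hLBdef, ← hLFdef, ← hQFdef, ← hc]
        split
        · exact hcase1
        · rw [EReal.coe_le_coe_iff]
          exact not_le.2 hcase2
      rw [hset]
      exact measure_empty
    · rw [if_neg hcase2]
      have hset : {u : ℝ | (t : EReal) ≤ randQuantile β s w u} = Set.Ioi c := by
        ext u
        simp only [Set.mem_setOf_eq, Set.mem_Ioi, randQuantile, ← hQdef, ← hLBdef,
          ← hLFdef, ← hQFdef, ← hc]
        split
        · rename_i hu
          exact iff_of_false hcase1 (not_lt.2 hu)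
        · rename_i hu
          exact iff_of_true (EReal.coe_le_coe_iff.2 (not_lt.1 hcase2)) (not_le.1 hu)
      rw [hset, Measure.restrict_apply measurableSet_Ioi]
      have hinter : Set.Ioi c ∩ Set.Icc (0:ℝ) 1 = Set.Ioc c 1 := by
        ext x
        simp only [Set.mem_inter_iff, Set.mem_Ioi, Set.mem_Icc, Set.mem_Ioc]
        constructor
        · rintro ⟨hcx, -, hx1⟩; exact ⟨hcx, hx1⟩
        · rintro ⟨hcx, hx1⟩; exact ⟨hcx, ⟨hc0.trans hcx.le, hx1⟩⟩
      rw [hinter, Real.volume_Ioc]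

lemma coverProb_congr {m : ℕ} (S : Fin m → ℝ) (w : Fin (m+1) → ℝ)
    (hw : ∀ i, 0 ≤ w i) (hw1 : ∑ i, w i = 1) {β : ℝ} (hβ : β ∈ Set.Ioo (0:ℝ) 1)
    (t t' : ℝ)
    (hcomp : ∀ i j : Fin (m+1), (Fin.snoc S t : Fin (m+1) → ℝ) i ≤ (Fin.snoc S t : Fin (m+1) → ℝ) j ↔ (Fin.snoc S t' : Fin (m+1) → ℝ) i ≤ (Fin.snoc S t' : Fin (m+1) → ℝ) j) :
    coverProb β S w t = coverProb β S w t' := by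
  obtain ⟨hβ0, hβ1⟩ := hβ
  set s : Fin (m+1) → ℝ := Fin.snoc S t with hs
  set s' : Fin (m+1) → ℝ := Fin.snoc S t' with hs'
  have heq : ∀ i j, s i = s j ↔ s' i = s' j := by
    intro i j
    rw [le_antisymm_iff, le_antisymm_iff, hcomp i j, hcomp j i]
  have hd : ∀ j, dCdf s w (s j) = dCdf s' w (s' j) := by
    intro j
    unfold dCdf
    apply Finset.sum_congr _ fun _ _ => rfl
    apply Finset.filter_congr
    intro i _
    exact hcomp i j
  obtain ⟨j₀, h1, h2⟩ := exists_quantile_char s w hw1 hβ1.le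
  have hQ : quantile β s w = s j₀ := quantile_eq s w hw hβ0 j₀ h1 h2
  have h1' : β ≤ dCdf s' w (s' j₀) := by rw [← hd]; exact h1
  have h2' : ∀ k, β ≤ dCdf s' w (s' k) → s' j₀ ≤ s' k := by
    intro k hk
    rw [← hcomp]
    exact h2 k (by rw [hd]; exact hk)
  have hQ' : quantile β s' w = s' j₀ := quantile_eq s' w hw hβ0 j₀ h1' h2'
  have hM : (∑ j ∈ Finset.univ.filter fun j => s j = quantile β s w, w j)
      = ∑ j ∈ Finset.univ.filter fun j => s' j = quantile β s' w, w j := by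
    rw [hQ, hQ']
    apply Finset.sum_congr _ fun _ _ => rfl
    apply Finset.filter_congr
    intro i _
    exact heq i j₀
  have hLB : (quantileLB β s w = ⊥ ∧ quantileLB β s' w = ⊥ ∧
        eCdf s w (quantileLB β s w) = eCdf s' w (quantileLB β s' w))
      ∨ ∃ j₁, quantileLB β s w = (s j₁ : EReal) ∧ quantileLB β s' w = (s' j₁ : EReal) ∧
        eCdf s w (quantileLB β s w) = eCdf s' w (quantileLB β s' w) := by
    rcases quantileLB_char s w hw hβ0 j₀ hQ h1 h2 with
      ⟨hbot, hbm⟩ | ⟨j₁, hLB1, hnb, hcc1, hcc2, hmin⟩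
    · left
      have hbot' : quantileLB β s' w = ⊥ :=
        quantileLB_eq_bot s' w hβ0 (by rw [← hM]; exact hbm)
      exact ⟨hbot, hbot', by rw [hbot, hbot', eCdf_bot, eCdf_bot]⟩
    · right
      have hLB1' : quantileLB β s' w = (s' j₁ : EReal) := by
        apply quantileLB_eq s' w (by rw [← hM]; exact hnb) j₁ (by rw [← hd]; exact hcc1)
          (by rw [← hd, ← hM]; exact hcc2)
        intro k hk1 hk2
        rw [← hcomp]
        exact hmin k (by rw [hd]; exact hk1) (by rw [hd, hM]; exact hk2)
      refine ⟨j₁, hLB1, hLB1', ?_⟩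
      rw [hLB1, hLB1', eCdf_coe, eCdf_coe, hd]
  have hQFeq : dCdf s w (quantile β s w) = dCdf s' w (quantile β s' w) := by
    rw [hQ, hQ', hd]
  have hLFeq : eCdf s w (quantileLB β s w) = eCdf s' w (quantileLB β s' w) := by
    rcases hLB with ⟨-, -, h⟩ | ⟨-, -, -, h⟩
    exacts [h, h]
  have hst : s (Fin.last m) = t := by simp [hs]
  have hst' : s' (Fin.last m) = t' := by simp [hs']
  have hcond1 : ((t : EReal) ≤ quantileLB β s w) ↔ ((t' : EReal) ≤ quantileLB β s' w) := by
    rcases hLB with ⟨hb, hb', -⟩ | ⟨j₁, hb, hb', -⟩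
    · rw [hb, hb']
      simp
    · rw [hb, hb', EReal.coe_le_coe_iff, EReal.coe_le_coe_iff]
      have h := hcomp (Fin.last m) j₁
      rwa [hst, hst'] at h
  have hcond2 : (quantile β s w < t) ↔ (quantile β s' w < t') := by
    rw [hQ, hQ', ← not_le, ← not_le]
    have h := hcomp (Fin.last m) j₀
    rw [hst, hst'] at h
    exact not_congr h
  rw [coverProb_formula S w hw hw1 ⟨hβ0, hβ1⟩ t, coverProb_formula S w hw hw1 ⟨hβ0, hβ1⟩ t']
  by_cases hA : (t : EReal) ≤ quantileLB β s w
  · rw [if_pos hA, if_pos (hcond1.1 hA)]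
  · rw [if_neg hA, if_neg (fun h => hA (hcond1.2 h))]
    by_cases hB : quantile β s w < t
    · rw [if_pos hB, if_pos (hcond2.1 hB)]
    · rw [if_neg hB, if_neg (fun h => hB (hcond2.2 h)), hQFeq, hLFeq]

/-- For distinct nonnegative sorted calibration scores
`S 1 < ... < S m` with masses `w 1, ..., w m` and test mass `w (m+1)`, the function
`t ↦ P(t ≤ RandomizedQuantile_β(F_t))` is constant on each of the `m + 1` open intervals
between consecutive calibration scores; moreover its value equals `1` if `t` is at most the
`β`-quantile lower bound of `F_t`, equals `0` if `t` exceeds the `β`-quantile of `F_t`, and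
otherwise equals `1 − (QF − β)/(QF − LF)`. -/
theorem statement_12 {m : ℕ} (S : Fin m → ℝ) (hS0 : ∀ i, 0 ≤ S i) (hSmono : StrictMono S)
    (w : Fin (m + 1) → ℝ) (hw : ∀ i, 0 ≤ w i) (hw1 : ∑ i, w i = 1)
    (β : ℝ) (hβ : β ∈ Set.Ioo (0 : ℝ) 1) :
    (∀ t t' : ℝ, 0 ≤ t → 0 ≤ t' → (∀ i, t ≠ S i) → (∀ i, t' ≠ S i) →
      (∀ i, t < S i ↔ t' < S i) → coverProb β S w t = coverProb β S w t')
    ∧ ∀ t : ℝ, 0 ≤ t → (∀ i, t ≠ S i) →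
        (((t : EReal) ≤ quantileLB β (Fin.snoc S t) w → coverProb β S w t = 1)
        ∧ (quantile β (Fin.snoc S t) w < t → coverProb β S w t = 0)
        ∧ (¬ (t : EReal) ≤ quantileLB β (Fin.snoc S t) w →
            ¬ quantile β (Fin.snoc S t) w < t →
            coverProb β S w t
              = ENNReal.ofReal
                  (1 - (dCdf (Fin.snoc S t) w (quantile β (Fin.snoc S t) w) - β) /
                    (dCdf (Fin.snoc S t) w (quantile β (Fin.snoc S t) w)
                      - eCdf (Fin.snoc S t) w (quantileLB β (Fin.snoc S t) w))))) := by
  obtain ⟨hβ0, hβ1⟩ := hβ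
  constructor
  · intro t t' ht ht' htS ht'S hiff
    apply coverProb_congr S w hw hw1 ⟨hβ0, hβ1⟩
    intro i j
    induction i using Fin.lastCases with
    | last =>
      induction j using Fin.lastCases with
      | last => exact iff_of_true le_rfl le_rfl
      | cast j =>
        simp only [Fin.snoc_last, Fin.snoc_castSucc]
        exact ⟨fun h => ((hiff j).1 (h.lt_of_ne (htS j))).le,
               fun h => ((hiff j).2 (h.lt_of_ne (ht'S j))).le⟩
    | cast i =>
      induction j using Fin.lastCases with
      | last =>
        simp only [Fin.snoc_last, Fin.snoc_castSucc]
        rw [← not_lt, ← not_lt, hiff i]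
      | cast j =>
        simp only [Fin.snoc_castSucc]
  · intro t ht htS
    obtain ⟨j₀, h1, h2⟩ := exists_quantile_char (Fin.snoc S t) w hw1 hβ1.le
    have hQ := quantile_eq (Fin.snoc S t) w hw hβ0 j₀ h1 h2
    have hLBlt := quantileLB_lt (Fin.snoc S t) w hw hβ0 j₀ hQ h1 h2
    refine ⟨?_, ?_, ?_⟩
    · intro h
      rw [coverProb_formula S w hw hw1 ⟨hβ0, hβ1⟩ t, if_pos h]
    · intro h
      have hnle : ¬ (t : EReal) ≤ quantileLB β (Fin.snoc S t) w := by
        intro hle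
        have h3 := lt_of_le_of_lt hle hLBlt
        rw [EReal.coe_lt_coe_iff] at h3
        rw [hQ] at h
        linarith
      rw [coverProb_formula S w hw hw1 ⟨hβ0, hβ1⟩ t, if_neg hnle, if_pos h]
    · intro hnle hnlt
      rw [coverProb_formula S w hw hw1 ⟨hβ0, hβ1⟩ t, if_neg hnle, if_neg hnlt]

end
end
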